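/- Let G be a graph with edge set E = E1 ∪ E2, M1 a maximal matching of (V, E1), and M2 a maximal matching of (V, E2). Then the graph M1 ∪ M2 contains a matching of size at least OPT(G)/3, where OPT(G) is the maximum size of a matching in G. -/

import Mathlib

/-- A matching: a set of non-loop edges that are pairwise vertex-disjoint. -/
def EdgeMatching {V : Type} (M : Finset (Sym2 V)) : Prop :=
  (∀ e ∈ M, ¬ e.IsDiag) ∧ ∀ e ∈ M, ∀ f ∈ M, e ≠ f → ∀ v : V, v ∈ e → v ∉ f

/-- `M` is a maximal matching of the graph with edge set `E`. -/
def MaximalMatchingIn {V : Type} [DecidableEq V] (E M : Finset (Sym2 V)) : Prop :=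
  M ⊆ E ∧ EdgeMatching M ∧ ∀ e ∈ E, e ∉ M → ¬ EdgeMatching (insert e M)

lemma exists_meet {V : Type} [DecidableEq V] (N : Finset (Sym2 V)) (hN : EdgeMatching N)
    (e : Sym2 V) (hed : ¬ e.IsDiag) (h : ¬ EdgeMatching (insert e N)) :
    ∃ f ∈ N, ∃ v, v ∈ e ∧ v ∈ f := by
  by_contra hc
  push_neg at hc
  apply h
  constructor
  · intro g hg
    rcases Finset.mem_insert.mp hg with rfl | hg
    · exact hed
    · exact hN.1 g hg
  · intro g hg g' hg' hgg' v hvg hvg'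
    rcases Finset.mem_insert.mp hg with hge | hgN <;>
      rcases Finset.mem_insert.mp hg' with hg'e | hg'N
    · exact hgg' (hge.trans hg'e.symm)
    · rw [hge] at hvg
      exact hc g' hg'N v hvg hvg'
    · rw [hg'e] at hvg'
      exact hc g hgN v hvg' hvg
    · exact hN.2 g hgN g' hg'N hgg' v hvg hvg'

lemma sym2_eq_of_mem {V : Type} {e : Sym2 V} {a b : V} (ha : a ∈ e) (hb : b ∈ e)
    (hab : a ≠ b) : e = s(a, b) := by
  revert ha hb
  induction e using Sym2.ind with
  | _ x y =>
    intro ha hb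
    rw [Sym2.mem_iff] at ha hb
    rcases ha with rfl | rfl <;> rcases hb with rfl | rfl
    · exact absurd rfl hab
    · rfl
    · exact Sym2.eq_swap
    · exact absurd rfl hab

lemma sym2_filter_card_le {V : Type} [Fintype V] [DecidableEq V] (e : Sym2 V) :
    (Finset.univ.filter (· ∈ e)).card ≤ 2 := by
  induction e using Sym2.ind with
  | _ x y =>
    have hsub : (Finset.univ.filter (· ∈ s(x, y))) ⊆ {x, y} := by
      intro v hv
      simp only [Finset.mem_filter, Sym2.mem_iff] at hv
      simp only [Finset.mem_insert, Finset.mem_singleton]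
      exact hv.2
    calc (Finset.univ.filter (· ∈ s(x, y))).card ≤ ({x, y} : Finset V).card :=
          Finset.card_le_card hsub
      _ ≤ 2 := by
          have := Finset.card_insert_le x ({y} : Finset V)
          simpa using this

/-- if `M1`, `M2` are maximal matchings of `(V, E1)`, `(V, E2)`, then
`M1 ∪ M2` contains a matching of size at least `OPT(G)/3` for the graph `G` with
edge set `E1 ∪ E2`. -/
theorem union_contains_third_of_opt {V : Type} [Fintype V] [DecidableEq V]
    (E1 E2 M1 M2 : Finset (Sym2 V))
    (hM1 : MaximalMatchingIn E1 M1) (hM2 : MaximalMatchingIn E2 M2) :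
    ∃ M' ⊆ M1 ∪ M2, EdgeMatching M' ∧
      ∀ M ⊆ E1 ∪ E2, EdgeMatching M → M.card ≤ 3 * M'.card := by
  classical
  set H : Finset (Sym2 V) := M1 ∪ M2 with hH
  obtain ⟨hM1s, hM1m, hM1max⟩ := hM1
  obtain ⟨hM2s, hM2m, hM2max⟩ := hM2
  -- pick a maximum-cardinality matching `M'` inside `H`
  have hTne : (H.powerset.filter fun s => EdgeMatching s).Nonempty :=
    ⟨∅, Finset.mem_filter.mpr ⟨Finset.empty_mem_powerset _, by simp [EdgeMatching]⟩⟩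
  obtain ⟨M', hM'T, hM'max⟩ := Finset.exists_max_image _ Finset.card hTne
  simp only [Finset.mem_filter, Finset.mem_powerset] at hM'T
  obtain ⟨hM'H, hM'm⟩ := hM'T
  have hmax : ∀ s ⊆ H, EdgeMatching s → s.card ≤ M'.card := fun s hs hsm =>
    hM'max s (Finset.mem_filter.mpr ⟨Finset.mem_powerset.mpr hs, hsm⟩)
  refine ⟨M', hM'H, hM'm, ?_⟩
  intro M hM hMm
  -- basic facts
  have hone : ∀ (N : Finset (Sym2 V)), EdgeMatching N →
      ∀ e ∈ N, ∀ f ∈ N, ∀ v : V, v ∈ e → v ∈ f → e = f := by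
    intro N hN e he f hf v hv hvf
    by_contra hne
    exact hN.2 e he f hf hne v hv hvf
  have hdeg : ∀ (v : V) (e f g : Sym2 V), e ∈ H → f ∈ H → g ∈ H →
      v ∈ e → v ∈ f → v ∈ g → e ≠ f → e ≠ g → f ≠ g → False := by
    intro v e f g heH hfH hgH hve hvf hvg hef heg hfg
    rw [hH, Finset.mem_union] at heH hfH hgH
    rcases heH with h1 | h1 <;> rcases hfH with h2 | h2 <;> rcases hgH with h3 | h3
    · exact hef (hone M1 hM1m e h1 f h2 v hve hvf)
    · exact hef (hone M1 hM1m e h1 f h2 v hve hvf)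
    · exact heg (hone M1 hM1m e h1 g h3 v hve hvg)
    · exact hfg (hone M2 hM2m f h2 g h3 v hvf hvg)
    · exact hfg (hone M1 hM1m f h2 g h3 v hvf hvg)
    · exact heg (hone M2 hM2m e h1 g h3 v hve hvg)
    · exact hef (hone M2 hM2m e h1 f h2 v hve hvf)
    · exact hef (hone M2 hM2m e h1 f h2 v hve hvf)
  have hnd : ∀ e ∈ H, ¬ e.IsDiag := by
    intro e he
    rw [hH, Finset.mem_union] at he
    rcases he with h | h
    · exact hM1m.1 e h
    · exact hM2m.1 e h
  rcases M.eq_empty_or_nonempty with rfl | hMne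
  · simp
  obtain ⟨e₀, he₀⟩ := hMne
  have hV : Nonempty V := Sym2.ind (fun a _ => ⟨a⟩) e₀
  set W : Finset V := Finset.univ.filter (fun v => ∃ e ∈ H, v ∈ e) with hWdef
  set C : Finset V := Finset.univ.filter (fun v => ∃ e ∈ M', v ∈ e) with hCdef
  set U : Finset V := W \ C with hUdef
  have hmemW : ∀ v : V, v ∈ W ↔ ∃ e ∈ H, v ∈ e := by
    intro v; simp [hWdef]
  have hmemC : ∀ v : V, v ∈ C ↔ ∃ e ∈ M', v ∈ e := by
    intro v; simp [hCdef]
  -- every edge of M has a vertex in W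
  have hMW : ∀ e ∈ M, ∃ v, v ∈ e ∧ v ∈ W := by
    intro e he
    have hed : ¬ e.IsDiag := hMm.1 e he
    have heE : e ∈ E1 ∪ E2 := hM he
    rw [Finset.mem_union] at heE
    have key : ∀ (E N : Finset (Sym2 V)), e ∈ E → MaximalMatchingIn E N → N ⊆ H →
        ∃ v, v ∈ e ∧ v ∈ W := by
      intro E N heE hN hNH
      by_cases heN : e ∈ N
      · obtain ⟨x, y, hxy⟩ : ∃ x y, e = s(x, y) := Sym2.ind (fun a b => ⟨a, b, rfl⟩) e
        refine ⟨x, by simp [hxy], (hmemW x).mpr ⟨e, hNH heN, by simp [hxy]⟩⟩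
      · obtain ⟨f, hf, v, hve, hvf⟩ :=
          exists_meet N hN.2.1 e hed (hN.2.2 e heE heN)
        exact ⟨v, hve, (hmemW v).mpr ⟨f, hNH hf, hvf⟩⟩
    rcases heE with h | h
    · exact key E1 M1 h ⟨hM1s, hM1m, hM1max⟩ (Finset.subset_union_left)
    · exact key E2 M2 h ⟨hM2s, hM2m, hM2max⟩ (Finset.subset_union_right)
  -- |M| ≤ |W|
  have hMleW : M.card ≤ W.card := by
    haveI := hV
    set c : Sym2 V → V := fun e =>
      if h : ∃ v, v ∈ e ∧ v ∈ W then h.choose else Classical.arbitrary V with hc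
    refine Finset.card_le_card_of_injOn c ?_ ?_
    · intro e he
      have h := hMW e he
      simp only [hc, dif_pos h]
      exact h.choose_spec.2
    · intro e1 he1 e2 he2 hceq
      have h1 := hMW e1 he1
      have h2 := hMW e2 he2
      simp only [hc, dif_pos h1, dif_pos h2] at hceq
      have hv1 := h1.choose_spec.1
      have hv2 := h2.choose_spec.1
      rw [hceq] at hv1
      exact hone M hMm e1 he1 e2 he2 _ hv1 hv2
  -- |C| ≤ 2 |M'|
  have hCle : C.card ≤ 2 * M'.card := by
    have hsub : C ⊆ M'.biUnion (fun e => Finset.univ.filter (· ∈ e)) := by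
      intro v hv
      obtain ⟨e, he, hve⟩ := (hmemC v).mp hv
      exact Finset.mem_biUnion.mpr ⟨e, he, by simp [hve]⟩
    calc C.card ≤ (M'.biUnion (fun e => Finset.univ.filter (· ∈ e))).card :=
          Finset.card_le_card hsub
      _ ≤ ∑ e ∈ M', (Finset.univ.filter (· ∈ e)).card := Finset.card_biUnion_le
      _ ≤ ∑ _e ∈ M', 2 := Finset.sum_le_sum (fun e _ => sym2_filter_card_le e)
      _ = 2 * M'.card := by rw [Finset.sum_const, smul_eq_mul, mul_comm]
  -- uncovered vertices of W
  have hUnc : ∀ u ∈ U, ∀ e ∈ M', u ∉ e := by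
    intro u hu e he hue
    rw [hUdef, Finset.mem_sdiff] at hu
    exact hu.2 ((hmemC u).mpr ⟨e, he, hue⟩)
  have hUex : ∀ u ∈ U, ∃ f ∈ M', ∃ v, v ∈ f ∧ v ≠ u ∧ s(u, v) ∈ H := by
    intro u hu
    have huW : u ∈ W := (Finset.mem_sdiff.mp (by rwa [hUdef] at hu)).1
    obtain ⟨g, hgH, hug⟩ := (hmemW u).mp huW
    obtain ⟨v, hguv⟩ : ∃ v, s(u, v) = g := ⟨Sym2.Mem.other' hug, Sym2.other_spec' hug⟩
    have hvu : v ≠ u := by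
      intro h
      apply hnd g hgH
      rw [← hguv, h]
      exact Sym2.mk_isDiag_iff.mpr rfl
    have hgM' : g ∉ M' := fun h => hUnc u hu g h hug
    have hgnot : ¬ EdgeMatching (insert g M') := by
      intro hmat
      have hsub : insert g M' ⊆ H := Finset.insert_subset hgH hM'H
      have := hmax _ hsub hmat
      rw [Finset.card_insert_of_notMem hgM'] at this
      omega
    obtain ⟨f, hf, w, hwg, hwf⟩ := exists_meet M' hM'm g (hnd g hgH) hgnot
    rw [← hguv, Sym2.mem_iff] at hwg
    rcases hwg with h | h
    · rw [h] at hwf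
      exact absurd hwf (hUnc u hu f hf)
    · rw [h] at hwf
      exact ⟨f, hf, v, hwf, hvu, by rwa [hguv]⟩
  -- |U| ≤ |M'|
  have hUle : U.card ≤ M'.card := by
    haveI := hV
    haveI : Nonempty (Sym2 V) := ⟨s(Classical.arbitrary V, Classical.arbitrary V)⟩
    set ψ : V → Sym2 V := fun u =>
      if h : ∃ f ∈ M', ∃ v, v ∈ f ∧ v ≠ u ∧ s(u, v) ∈ H then h.choose
      else Classical.arbitrary (Sym2 V) with hψ
    refine Finset.card_le_card_of_injOn ψ ?_ ?_
    · intro u hu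
      have h := hUex u hu
      simp only [hψ, dif_pos h]
      exact h.choose_spec.1
    · intro u1 hu1' u2 hu2' heq
      by_contra hne
      have hu1 : u1 ∈ U := hu1'
      have hu2 : u2 ∈ U := hu2'
      have h1 := hUex u1 hu1
      have h2 := hUex u2 hu2
      simp only [hψ, dif_pos h1, dif_pos h2] at heq
      obtain ⟨hf1M, v1, hv1f, hv1u1, hg1H⟩ := h1.choose_spec
      obtain ⟨hf2M, v2, hv2f, hv2u2, hg2H⟩ := h2.choose_spec
      set f : Sym2 V := h1.choose with hfdef
      rw [← heq] at hv2f
      -- now v1, v2 ∈ f ∈ M', s(u1,v1) ∈ H, s(u2,v2) ∈ H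
      have hu1f : u1 ∉ f := hUnc u1 hu1 f hf1M
      have hu2f : u2 ∉ f := hUnc u2 hu2 f hf1M
      by_cases hvv : v1 = v2
      · subst hvv
        -- three distinct edges at v1 in H : contradiction with max degree 2
        have h1ne2 : s(u1, v1) ≠ s(u2, v1) := by
          intro h
          have hm : u1 ∈ s(u2, v1) := by rw [← h]; simp
          rw [Sym2.mem_iff] at hm
          rcases hm with h' | h'
          · exact hne h'
          · rw [h'] at hu1f
            exact hu1f hv1f
        have h1nef : s(u1, v1) ≠ f := by
          intro h
          exact hu1f (by rw [← h]; simp)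
        have h2nef : s(u2, v1) ≠ f := by
          intro h
          exact hu2f (by rw [← h]; simp)
        exact hdeg v1 (s(u1, v1)) (s(u2, v1)) f hg1H hg2H (hM'H hf1M)
          (by simp) (by simp) hv1f h1ne2 h1nef h2nef
      · -- augmenting path: swap f for s(u1,v1), s(u2,v2)
        have hfeq : f = s(v1, v2) := sym2_eq_of_mem hv1f hv2f hvv
        set A : Sym2 V := s(u1, v1) with hA
        set B : Sym2 V := s(u2, v2) with hB
        have hu1B : u1 ∉ B := by
          rw [hB, Sym2.mem_iff]
          rintro (h' | h')
          · exact hne h'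
          · rw [h'] at hu1f
            exact hu1f hv2f
        have hu2A : u2 ∉ A := by
          rw [hA, Sym2.mem_iff]
          rintro (h' | h')
          · exact hne h'.symm
          · rw [h'] at hu2f
            exact hu2f hv1f
        have hAB : ∀ w, w ∈ A → w ∉ B := by
          intro w hwA hwB
          rw [hA, Sym2.mem_iff] at hwA
          rcases hwA with h' | h'
          · rw [h'] at hwB
            exact hu1B hwB
          · rw [hB, Sym2.mem_iff, h'] at hwB
            rcases hwB with h'' | h''
            · rw [← h''] at hu2f
              exact hu2f hv1f
            · exact hvv h''
        have hAer : ∀ g ∈ M'.erase f, ∀ w, w ∈ A → w ∉ g := by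
          intro g hg w hwA hwg
          rw [hA, Sym2.mem_iff] at hwA
          have hgM : g ∈ M' := Finset.mem_of_mem_erase hg
          rcases hwA with h' | h'
          · rw [h'] at hwg
            exact hUnc u1 hu1 g hgM hwg
          · rw [h'] at hwg
            exact (Finset.ne_of_mem_erase hg) (hone M' hM'm g hgM f hf1M v1 hwg hv1f)
        have hBer : ∀ g ∈ M'.erase f, ∀ w, w ∈ B → w ∉ g := by
          intro g hg w hwB hwg
          rw [hB, Sym2.mem_iff] at hwB
          have hgM : g ∈ M' := Finset.mem_of_mem_erase hg
          rcases hwB with h' | h'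
          · rw [h'] at hwg
            exact hUnc u2 hu2 g hgM hwg
          · rw [h'] at hwg
            exact (Finset.ne_of_mem_erase hg) (hone M' hM'm g hgM f hf1M v2 hwg hv2f)
        set M'' : Finset (Sym2 V) := insert A (insert B (M'.erase f)) with hM''
        have hsub : M'' ⊆ H := by
          intro g hg
          rw [hM''] at hg
          rcases Finset.mem_insert.mp hg with rfl | hg
          · exact hg1H
          · rcases Finset.mem_insert.mp hg with rfl | hg
            · exact hg2H
            · exact hM'H (Finset.mem_of_mem_erase hg)
        have hmatch : EdgeMatching M'' := by
          constructor
          · intro g hg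
            rw [hM''] at hg
            rcases Finset.mem_insert.mp hg with rfl | hg
            · exact hnd A hg1H
            · rcases Finset.mem_insert.mp hg with rfl | hg
              · exact hnd B hg2H
              · exact hM'm.1 g (Finset.mem_of_mem_erase hg)
          · intro g hg g' hg' hgg' w hwg hwg'
            rw [hM''] at hg hg'
            rcases Finset.mem_insert.mp hg with rfl | hg <;>
              rcases Finset.mem_insert.mp hg' with rfl | hg'
            · exact hgg' rfl
            · rcases Finset.mem_insert.mp hg' with rfl | hg'
              · exact hAB w hwg hwg'
              · exact hAer g' hg' w hwg hwg'
            · rcases Finset.mem_insert.mp hg with rfl | hg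
              · exact hAB w hwg' hwg
              · exact hAer g hg w hwg' hwg
            · rcases Finset.mem_insert.mp hg with rfl | hg <;>
                rcases Finset.mem_insert.mp hg' with rfl | hg'
              · exact hgg' rfl
              · exact hBer g' hg' w hwg hwg'
              · exact hBer g hg w hwg' hwg
              · exact hM'm.2 g (Finset.mem_of_mem_erase hg) g'
                  (Finset.mem_of_mem_erase hg') hgg' w hwg hwg'
        -- cardinality
        have hBnot : B ∉ M'.erase f := by
          intro h
          exact hUnc u2 hu2 B (Finset.mem_of_mem_erase h) (by rw [hB]; simp)
        have hAnot : A ∉ insert B (M'.erase f) := by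
          intro h
          rcases Finset.mem_insert.mp h with h | h
          · exact hu1B (by rw [← h, hA]; simp)
          · exact hUnc u1 hu1 A (Finset.mem_of_mem_erase h) (by rw [hA]; simp)
        have hcard : M''.card = M'.card + 1 := by
          rw [hM'', Finset.card_insert_of_notMem hAnot,
            Finset.card_insert_of_notMem hBnot, Finset.card_erase_of_mem hf1M]
          have : 1 ≤ M'.card := Finset.card_pos.mpr ⟨f, hf1M⟩
          omega
        have := hmax M'' hsub hmatch
        omega
  -- combine
  have hCW : C ⊆ W := by
    intro v hv
    obtain ⟨e, he, hve⟩ := (hmemC v).mp hv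
    exact (hmemW v).mpr ⟨e, hM'H he, hve⟩
  have hWcard : U.card + C.card = W.card := by
    rw [hUdef]
    exact Finset.card_sdiff_add_card_eq_card hCW
  omega
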